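/- Let (Ω, μ) be a probability space, let n, N be positive natural numbers, let φ : Ω → ℝ^{N+1} be measurable with square-integrable entries, and let Q ∈ M_n(ℝ) be symmetric. Write Φₙ(ω) := φ(ω) ⊗ Iₙ (with φ(ω) viewed as an (N+1) × 1 matrix) and let G be the Gram matrix with entries G_{ij} = ∫ φᵢ φⱼ dμ. Then for every x_pc ∈ ℝ^{n(N+1)}, setting x(ω) := Φₙ(ω)ᵀ x_pc, one has ∫ x(ω)ᵀ Q x(ω) dμ(ω) = x_pcᵀ (G ⊗ Q) x_pc; that is, the expected quadratic cost of the polynomial-chaos approximation equals the quadratic form of the PC coefficient vector with weight matrix Q_pc = E[Φₙ Q Φₙᵀ] = G ⊗ Q. -/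

import Mathlib

open Matrix MeasureTheory
open scoped Kronecker

/-- `φ ⊗ Iₙ`: the Kronecker product of the vector `φ ∈ ℝ^{N+1}` (viewed as an `(N+1) × 1`
matrix) with the `n × n` identity matrix, giving an `n(N+1) × n` real matrix (the trivial
`Fin 1` column index is dropped). -/
noncomputable def vecKronId (n N : ℕ) (φ : Fin (N + 1) → ℝ) :
    Matrix (Fin (N + 1) × Fin n) (Fin n) ℝ :=
  (Matrix.replicateCol (Fin 1) φ ⊗ₖ (1 : Matrix (Fin n) (Fin n) ℝ)).submatrix id fun j => ((0 : Fin 1), j)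

/-- Swapping the order of summation in a quadruple sum. -/
lemma sumSwap4 {a b c d : Type*} [Fintype a] [Fintype b] [Fintype c] [Fintype d]
    (f : a → b → c → d → ℝ) :
    ∑ k, ∑ l, ∑ j, ∑ i, f k l j i = ∑ i, ∑ k, ∑ j, ∑ l, f k l j i := by
  calc ∑ k, ∑ l, ∑ j, ∑ i, f k l j i
      = ∑ k, ∑ l, ∑ i, ∑ j, f k l j i :=
        Finset.sum_congr rfl fun k _ => Finset.sum_congr rfl fun l _ => Finset.sum_comm
    _ = ∑ k, ∑ i, ∑ l, ∑ j, f k l j i :=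
        Finset.sum_congr rfl fun k _ => Finset.sum_comm
    _ = ∑ i, ∑ k, ∑ l, ∑ j, f k l j i := Finset.sum_comm
    _ = ∑ i, ∑ k, ∑ j, ∑ l, f k l j i :=
        Finset.sum_congr rfl fun i _ => Finset.sum_congr rfl fun k _ => Finset.sum_comm

/-- For the polynomial-chaos approximation `x(ω) = Φₙ(ω)ᵀ x_pc` with `Φₙ(ω) = φ(ω) ⊗ Iₙ`,
the expected quadratic cost satisfies `E[xᵀQx] = x_pcᵀ (G ⊗ Q) x_pc`, where
`G i j = E[φᵢφⱼ]` is the Gram matrix; i.e. `Q_pc = E[Φₙ Q Φₙᵀ] = G ⊗ Q`. -/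
theorem stmt17 {Ω : Type*} [MeasurableSpace Ω] (μ : Measure Ω) [IsProbabilityMeasure μ]
    (n N : ℕ) (hn : 0 < n) (hN : 0 < N)
    (φ : Ω → Fin (N + 1) → ℝ)
    (hφmeas : ∀ i, Measurable fun ω => φ ω i)
    (hφL2 : ∀ i, MemLp (fun ω => φ ω i) 2 μ)
    (Q : Matrix (Fin n) (Fin n) ℝ) (hQ : Qᵀ = Q) :
    ∀ xpc : Fin (N + 1) × Fin n → ℝ,
      ∫ ω, ((vecKronId n N (φ ω))ᵀ *ᵥ xpc) ⬝ᵥ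
          (Q *ᵥ ((vecKronId n N (φ ω))ᵀ *ᵥ xpc)) ∂μ =
        xpc ⬝ᵥ (((Matrix.of fun i j => ∫ ω, φ ω i * φ ω j ∂μ) ⊗ₖ Q) *ᵥ xpc) := by
  intro xpc
  have hint : ∀ i j : Fin (N + 1), Integrable (fun ω => φ ω i * φ ω j) μ := by
    intro i j
    have h : (1 : ENNReal)/1 = 1/2 + 1/2 := by
      simp [one_div, ENNReal.inv_two_add_inv_two]
    have := ((hφL2 i).smul (hφL2 j) (r := 1) (hpqr := ⟨by simpa [one_div] using h.symm⟩)).integrable le_rfl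
    simpa [smul_eq_mul, mul_comm, Pi.mul_def] using this
  have hv : ∀ ω : Ω,
      ((vecKronId n N (φ ω))ᵀ *ᵥ xpc) = fun k => ∑ i, φ ω i * xpc (i, k) := by
    intro ω
    funext k
    simp [vecKronId, mulVec, dotProduct, Fintype.sum_prod_type, Matrix.one_apply,
      mul_ite, mul_zero, mul_one, ite_mul, zero_mul, mul_assoc]
  have key : ∀ ω : Ω,
      ((vecKronId n N (φ ω))ᵀ *ᵥ xpc) ⬝ᵥ (Q *ᵥ ((vecKronId n N (φ ω))ᵀ *ᵥ xpc))
        = ∑ p : Fin (N + 1) × Fin n, ∑ q : Fin (N + 1) × Fin n,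
            (fun ω => φ ω p.1 * φ ω q.1) ω * (xpc p * Q p.2 q.2 * xpc q) := by
    intro ω
    rw [hv ω]
    simp only [dotProduct, mulVec, dotProduct, Finset.mul_sum, Finset.sum_mul,
      Fintype.sum_prod_type]
    rw [sumSwap4 (fun k l j i => φ ω i * xpc (i, k) * (Q k l * (φ ω j * xpc (j, l))))]
    refine Finset.sum_congr rfl fun i _ => Finset.sum_congr rfl fun k _ =>
      Finset.sum_congr rfl fun j _ => Finset.sum_congr rfl fun l _ => ?_
    ring
  rw [integral_congr_ae (Filter.Eventually.of_forall key)]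
  rw [integral_finset_sum _ (fun p _ =>
    integrable_finset_sum _ (fun q _ => (hint p.1 q.1).mul_const _))]
  simp_rw [integral_finset_sum _ (fun q _ => (hint _ _).mul_const _),
    integral_mul_const]
  simp only [dotProduct, mulVec, kroneckerMap_apply, Matrix.of_apply,
    Fintype.sum_prod_type, Finset.mul_sum, Finset.sum_mul]
  refine Finset.sum_congr rfl fun i _ => Finset.sum_congr rfl fun k _ =>
    Finset.sum_congr rfl fun j _ => Finset.sum_congr rfl fun l _ => ?_
  ring
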